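/- arXiv:1507.01854 — 6 statements merged into one kernel-verified Lean document; each statement's English description precedes it below -/
import Mathlib

section
/- For all real numbers x, y, z with x ≥ 0 and y + z ≥ 0, the quantity D(x,y,z) = 2·log((e^{x/2} + e^{(y+z)/2})/(e^{-x/2} + e^{(y+z)/2})) satisfies 0 ≤ D(x,y,z) ≤ 4·sinh(x/2)·exp(-(y+z)/2). -/
noncomputable def D (x y z : ℝ) : ℝ :=
  2 * Real.log ((Real.exp (x/2) + Real.exp ((y+z)/2)) / (Real.exp (-x/2) + Real.exp ((y+z)/2)))

theorem stmt0 (x y z : ℝ) (hx : 0 ≤ x) (hyz : 0 ≤ y + z) :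
    0 ≤ D x y z ∧ D x y z ≤ 4 * Real.sinh (x/2) * Real.exp (-(y+z)/2) := by
  have ha : (0:ℝ) < Real.exp (x/2) := Real.exp_pos _
  have hb : (0:ℝ) < Real.exp (-x/2) := Real.exp_pos _
  have hc : (0:ℝ) < Real.exp ((y+z)/2) := Real.exp_pos _
  set a := Real.exp (x/2) with hadef
  set b := Real.exp (-x/2) with hbdef
  set c := Real.exp ((y+z)/2) with hcdef
  have hba : b ≤ a := Real.exp_le_exp.mpr (by linarith)
  have hbc : (0:ℝ) < b + c := by linarith
  have hq : (1:ℝ) ≤ (a+c)/(b+c) := (one_le_div hbc).mpr (by linarith)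
  have hsinh : Real.sinh (x/2) = (a - b)/2 := by
    rw [Real.sinh_eq, hadef, hbdef, neg_div]
  have hexp : Real.exp (-(y+z)/2) = 1/c := by
    rw [neg_div, Real.exp_neg, hcdef, one_div]
  constructor
  · have := Real.log_nonneg hq
    unfold D
    linarith
  · have h1 : Real.log ((a+c)/(b+c)) ≤ (a+c)/(b+c) - 1 :=
      Real.log_le_sub_one_of_pos (by positivity)
    have h2 : (a+c)/(b+c) - 1 = (a-b)/(b+c) := by field_simp; ring
    have h3 : (a-b)/(b+c) ≤ (a-b)/c := by
      gcongr
      · linarith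
    unfold D
    rw [hsinh, hexp]
    have : Real.log ((a+c)/(b+c)) ≤ (a-b)/c := by linarith
    calc 2 * Real.log ((a+c)/(b+c)) ≤ 2 * ((a-b)/c) := by linarith
      _ = 4 * ((a-b)/2) * (1/c) := by ring
end

section
/- For all real x, y, z, the absolute value of the partial derivative of D(x,y,z) := 2·log((e^{x/2} + e^{(y+z)/2})/(e^{-x/2} + e^{(y+z)/2})) with respect to x is strictly less than 2·cosh(|x|/2)·exp(-(y+z)/2). -/
theorem stmt5 (x y z : ℝ) :
    |deriv (fun t : ℝ => D t y z) x| < 2 * Real.cosh (|x|/2) * Real.exp (-(y+z)/2) := by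
  set a : ℝ := Real.exp ((y+z)/2) with ha
  have hapos : 0 < a := Real.exp_pos _
  have hfe : (fun t : ℝ => D t y z) =
      (fun t : ℝ => 2 * (Real.log (Real.exp (t/2) + a) - Real.log (Real.exp (-t/2) + a))) := by
    funext t
    have h1 : 0 < Real.exp (t/2) + a := by positivity
    have h2 : 0 < Real.exp (-t/2) + a := by positivity
    simp only [D]; rw [← ha, Real.log_div h1.ne' h2.ne']
  have hd1 : HasDerivAt (fun t : ℝ => Real.log (Real.exp (t/2) + a))
      ((Real.exp (x/2) * (1/2)) / (Real.exp (x/2) + a)) x := by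
    have h : HasDerivAt (fun t : ℝ => Real.exp (t/2) + a) (Real.exp (x/2) * (1/2)) x :=
      (((hasDerivAt_id x).div_const 2).exp).add_const a
    exact h.log (by positivity)
  have hd2 : HasDerivAt (fun t : ℝ => Real.log (Real.exp (-t/2) + a))
      ((Real.exp (-x/2) * (-1/2)) / (Real.exp (-x/2) + a)) x := by
    have h0 : HasDerivAt (fun t : ℝ => -t/2) (-1/2) x := by
      simpa using ((hasDerivAt_id x).neg.div_const 2)
    have h : HasDerivAt (fun t : ℝ => Real.exp (-t/2) + a) (Real.exp (-x/2) * (-1/2)) x :=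
      (h0.exp).add_const a
    exact h.log (by positivity)
  have hD : HasDerivAt (fun t : ℝ => D t y z)
      (2 * ((Real.exp (x/2) * (1/2)) / (Real.exp (x/2) + a)
        - (Real.exp (-x/2) * (-1/2)) / (Real.exp (-x/2) + a))) x := by
    rw [hfe]
    exact (hd1.sub hd2).const_mul 2
  rw [hD.deriv]
  set u : ℝ := Real.exp (x/2) with hu
  set v : ℝ := Real.exp (-x/2) with hv
  have hupos : 0 < u := Real.exp_pos _
  have hvpos : 0 < v := Real.exp_pos _
  have hval : 2 * ((u * (1/2)) / (u + a) - (v * (-1/2)) / (v + a))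
      = u / (u + a) + v / (v + a) := by
    field_simp
    ring
  rw [hval]
  have hpos : 0 < u / (u + a) + v / (v + a) := by positivity
  rw [abs_of_pos hpos]
  have hrhs : 2 * Real.cosh (|x|/2) * Real.exp (-(y+z)/2) = u / a + v / a := by
    have hvu : v = u⁻¹ := by
      rw [hu, hv, show -x/2 = -(x/2) by ring, Real.exp_neg]
    have hea : Real.exp (-(y+z)/2) = a⁻¹ := by
      rw [show -(y+z)/2 = -((y+z)/2) by ring, Real.exp_neg, ha]
    rw [show |x|/2 = |x/2| by rw [abs_div]; norm_num, Real.cosh_abs, Real.cosh_eq,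
      hea, ← hu, hvu]
    field_simp
    rw [show Real.exp (-(x/2)) = u⁻¹ by rw [Real.exp_neg]]
    field_simp
  rw [hrhs]
  have h1 : u / (u + a) < u / a :=
    div_lt_div_of_pos_left hupos hapos (by linarith)
  have h2 : v / (v + a) < v / a :=
    div_lt_div_of_pos_left hvpos hapos (by linarith)
  linarith
end

section
/- For all x, y, L > 0, one has D(L, x, y)/L < H(x+y, L), where D(L,x,y) := 2·log((e^{L/2} + e^{(x+y)/2})/(e^{-L/2} + e^{(x+y)/2})) and H(u,v) := 1/(1 + e^{(u+v)/2}) + 1/(1 + e^{(u-v)/2}). -/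
noncomputable def H (u v : ℝ) : ℝ :=
  1 / (1 + Real.exp ((u+v)/2)) + 1 / (1 + Real.exp ((u-v)/2))

open Real Set in
lemma stmt9_aux (s : ℝ) (hs : 0 < s) :
    StrictMonoOn (fun u : ℝ => u * H s u -
      2 * Real.log ((Real.exp (u/2) + Real.exp (s/2)) / (Real.exp (-u/2) + Real.exp (s/2))))
      (Set.Ici 0) := by
  have hA : ∀ u : ℝ, (0:ℝ) < 1 + exp ((s+u)/2) := fun u => by positivity
  have hB : ∀ u : ℝ, (0:ℝ) < 1 + exp ((s-u)/2) := fun u => by positivity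
  have hP : ∀ u : ℝ, (0:ℝ) < exp (u/2) + exp (s/2) := fun u => by positivity
  have hQ : ∀ u : ℝ, (0:ℝ) < exp (-u/2) + exp (s/2) := fun u => by positivity
  have hder : ∀ u : ℝ, HasDerivAt (fun u : ℝ => u * H s u -
      2 * Real.log ((Real.exp (u/2) + Real.exp (s/2)) / (Real.exp (-u/2) + Real.exp (s/2))))
      (u * (exp ((s-u)/2)/2/(1+exp ((s-u)/2))^2 - exp ((s+u)/2)/2/(1+exp ((s+u)/2))^2)) u := by
    intro u
    have d1 : HasDerivAt (fun v : ℝ => (s+v)/2) (1/2) u := by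
      simpa using ((hasDerivAt_id u).const_add s).div_const 2
    have d2 : HasDerivAt (fun v : ℝ => (s-v)/2) (-1/2) u := by
      simpa using ((hasDerivAt_id u).const_sub s).div_const 2
    have dA : HasDerivAt (fun v : ℝ => 1 + exp ((s+v)/2)) (exp ((s+u)/2) * (1/2)) u :=
      d1.exp.const_add 1
    have dB : HasDerivAt (fun v : ℝ => 1 + exp ((s-v)/2)) (exp ((s-u)/2) * (-1/2)) u :=
      d2.exp.const_add 1
    have dAinv := dA.inv (ne_of_gt (hA u))
    have dBinv := dB.inv (ne_of_gt (hB u))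
    have dH : HasDerivAt (fun v : ℝ => H s v)
        (exp ((s-u)/2)/2/(1+exp ((s-u)/2))^2 - exp ((s+u)/2)/2/(1+exp ((s+u)/2))^2) u := by
      have h := dAinv.add dBinv
      rw [show (fun v : ℝ => H s v) = (fun v : ℝ =>
        (1+exp ((s+v)/2))⁻¹ + (1+exp ((s-v)/2))⁻¹) from funext fun v => by simp [H, one_div]]
      refine h.congr_deriv ?_
      ring
    have dP : HasDerivAt (fun v : ℝ => exp (v/2) + exp (s/2)) (exp (u/2) * (1/2)) u :=
      (((hasDerivAt_id u).div_const 2).exp).add_const _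
    have dQ : HasDerivAt (fun v : ℝ => exp (-v/2) + exp (s/2)) (exp (-u/2) * (-1/2)) u := by
      have : HasDerivAt (fun v : ℝ => -v/2) (-1/2) u := by
        simpa using ((hasDerivAt_id u).neg).div_const 2
      exact this.exp.add_const _
    have dD : HasDerivAt (fun v : ℝ =>
        2 * Real.log ((exp (v/2) + exp (s/2)) / (exp (-v/2) + exp (s/2))))
        (exp (u/2)/(exp (u/2) + exp (s/2)) + exp (-u/2)/(exp (-u/2) + exp (s/2))) u := by
      have hlog := ((dP.log (ne_of_gt (hP u))).sub (dQ.log (ne_of_gt (hQ u)))).const_mul 2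
      have : HasDerivAt (fun v : ℝ =>
          2 * (Real.log (exp (v/2) + exp (s/2)) - Real.log (exp (-v/2) + exp (s/2))))
          (2 * ((exp (u/2) * (1/2))/(exp (u/2) + exp (s/2))
            - (exp (-u/2) * (-1/2))/(exp (-u/2) + exp (s/2)))) u := hlog
      have heq : (fun v : ℝ =>
          2 * (Real.log (exp (v/2) + exp (s/2)) - Real.log (exp (-v/2) + exp (s/2)))) =
          (fun v : ℝ => 2 * Real.log ((exp (v/2) + exp (s/2)) / (exp (-v/2) + exp (s/2)))) := by
        funext v
        rw [Real.log_div (ne_of_gt (hP v)) (ne_of_gt (hQ v))]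
      rw [heq] at this
      convert this using 1
      ring
    -- D' = H
    have hDH : exp (u/2)/(exp (u/2) + exp (s/2)) + exp (-u/2)/(exp (-u/2) + exp (s/2)) = H s u := by
      have e1 : exp (u/2) * (1 + exp ((s-u)/2)) = exp (u/2) + exp (s/2) := by
        rw [mul_add, mul_one, ← Real.exp_add]; ring_nf
      have e2 : exp (-u/2) * (1 + exp ((s+u)/2)) = exp (-u/2) + exp (s/2) := by
        rw [mul_add, mul_one, ← Real.exp_add]; ring_nf
      rw [H, ← e1, ← e2, div_mul_cancel_left₀ (ne_of_gt (exp_pos (u/2))),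
        div_mul_cancel_left₀ (ne_of_gt (exp_pos (-u/2))), one_div, one_div]
      ring
    have := (((hasDerivAt_id u).mul dH).sub dD)
    refine this.congr_deriv ?_
    rw [hDH]
    simp only [id_eq]
    ring
  apply strictMonoOn_of_deriv_pos (convex_Ici 0)
  · exact (Continuous.continuousOn (continuous_iff_continuousAt.2
      fun u => (hder u).continuousAt))
  · intro u hu
    rw [interior_Ici] at hu
    rw [(hder u).deriv]
    have hu0 : 0 < u := hu
    have h1 : exp ((s+u)/2)/2/(1+exp ((s+u)/2))^2 < exp ((s-u)/2)/2/(1+exp ((s-u)/2))^2 := by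
      rw [div_lt_div_iff₀ (by positivity) (by positivity)]
      have hm : (0:ℝ) < exp ((s-u)/2) := exp_pos _
      have hp : (0:ℝ) < exp ((s+u)/2) := exp_pos _
      have hlt : exp ((s-u)/2) < exp ((s+u)/2) := by
        apply Real.exp_lt_exp.2; linarith
      have hprod : exp ((s-u)/2) * exp ((s+u)/2) = exp s := by
        rw [← Real.exp_add]; ring_nf
      have hgt1 : (1:ℝ) < exp s := by
        rw [← Real.exp_zero]; exact Real.exp_lt_exp.2 hs
      nlinarith [mul_pos (sub_pos.2 hlt) (sub_pos.2 hgt1)]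
    have := mul_pos hu0 (sub_pos.2 h1)
    linarith [this]

theorem stmt9 (x y L : ℝ) (hx : 0 < x) (hy : 0 < y) (hL : 0 < L) :
    D L x y / L < H (x+y) L := by
  have hs : 0 < x + y := by linarith
  have h := stmt9_aux (x+y) hs (Set.self_mem_Ici) (Set.mem_Ici.2 hL.le) hL
  simp only at h
  have h0 : (0:ℝ) * H (x+y) 0 -
      2 * Real.log ((Real.exp (0/2) + Real.exp ((x+y)/2)) / (Real.exp (-0/2) + Real.exp ((x+y)/2))) = 0 := by
    rw [show ((0:ℝ)/2) = 0 by norm_num, show ((-0:ℝ)/2) = 0 by norm_num,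
      div_self (by positivity), Real.log_one]
    ring
  rw [h0] at h
  have hD : D L x y = 2 * Real.log ((Real.exp (L/2) + Real.exp ((x+y)/2)) / (Real.exp (-L/2) + Real.exp ((x+y)/2))) := rfl
  rw [div_lt_iff₀ hL, hD]
  linarith [h]
end

section
/- Let I be a countable index set, and suppose ℓ₁, ℓ₂ : I → ℝ are functions with ℓ₁(i), ℓ₂(i) > 0, such that for every natural number N the set {i ∈ I : N ≤ ℓ₁(i) + ℓ₂(i) < N+1} has cardinality at most m·(N+1)^k for constants m > 0 and k ∈ ℕ. Then for every L > 0 the series ∑_{i ∈ I} D(L, ℓ₁(i), ℓ₂(i)) converges (is summable), where D(L,x,y) := 2·log((e^{L/2} + e^{(x+y)/2})/(e^{-L/2} + e^{(x+y)/2})). -/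
theorem stmt10 (I : Type*) [Countable I] (ℓ₁ ℓ₂ : I → ℝ)
    (hpos : ∀ i, 0 < ℓ₁ i ∧ 0 < ℓ₂ i)
    (m : ℝ) (hm : 0 < m) (k : ℕ)
    (hfin : ∀ N : ℕ, {i : I | (N : ℝ) ≤ ℓ₁ i + ℓ₂ i ∧ ℓ₁ i + ℓ₂ i < N + 1}.Finite)
    (hcard : ∀ N : ℕ,
      ({i : I | (N : ℝ) ≤ ℓ₁ i + ℓ₂ i ∧ ℓ₁ i + ℓ₂ i < N + 1}.ncard : ℝ) ≤ m * (N + 1) ^ k)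
    (L : ℝ) (hL : 0 < L) :
    Summable (fun i => D L (ℓ₁ i) (ℓ₂ i)) := by
  set C : ℝ := 2 * (Real.exp (L/2) - Real.exp (-L/2)) with hCdef
  have hexp : Real.exp (-L/2) < Real.exp (L/2) := Real.exp_lt_exp.mpr (by linarith)
  have hCpos : 0 < C := by rw [hCdef]; linarith
  set r : ℝ := Real.exp (-(1:ℝ)/2) with hrdef
  have hr0 : 0 < r := Real.exp_pos _
  have hr1 : r < 1 := by rw [hrdef, Real.exp_lt_one_iff]; norm_num
  have hrn : ∀ n : ℕ, Real.exp (-(n:ℝ)/2) = r ^ n := by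
    intro n
    rw [hrdef, ← Real.exp_nat_mul]
    congr 1
    ring
  set g : ℕ → ℝ := fun N => m * ((N:ℝ)+1)^k * Real.exp (-(N:ℝ)/2) with hgdef
  have hgnn : ∀ N, 0 ≤ g N := by
    intro N; rw [hgdef]; positivity
  have hgsum : Summable g := by
    have hs : Summable (fun n : ℕ => (n:ℝ)^k * r^n) :=
      summable_pow_mul_geometric_of_norm_lt_one k
        (by rwa [Real.norm_eq_abs, abs_of_pos hr0])
    have h2 : Summable (fun n : ℕ => (((n+1:ℕ)):ℝ)^k * r^(n+1)) :=
      hs.comp_injective (add_left_injective 1)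
    have h3 := h2.mul_left (m / r)
    apply h3.congr
    intro n
    have hgn : g n = m * ((n:ℝ)+1)^k * Real.exp (-(n:ℝ)/2) := rfl
    rw [hgn, hrn n, pow_succ]
    push_cast
    field_simp
  -- pointwise bounds on D
  have hD : ∀ i, 0 ≤ D L (ℓ₁ i) (ℓ₂ i) ∧
      D L (ℓ₁ i) (ℓ₂ i) ≤ C * Real.exp (-(ℓ₁ i + ℓ₂ i)/2) := by
    intro i
    set s : ℝ := ℓ₁ i + ℓ₂ i with hsdef
    have hs : 0 < s := add_pos (hpos i).1 (hpos i).2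
    set A : ℝ := Real.exp (L/2) + Real.exp (s/2) with hA
    set B : ℝ := Real.exp (-L/2) + Real.exp (s/2) with hB
    have hBpos : 0 < B := by rw [hB]; positivity
    have hApos : 0 < A := by rw [hA]; positivity
    have hBA : B ≤ A := by rw [hA, hB]; linarith
    have hDef : D L (ℓ₁ i) (ℓ₂ i) = 2 * Real.log (A / B) := rfl
    constructor
    · rw [hDef]
      have : (1:ℝ) ≤ A / B := (one_le_div hBpos).mpr hBA
      have := Real.log_nonneg this
      linarith
    · rw [hDef]
      have hlog : Real.log (A / B) ≤ A / B - 1 :=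
        Real.log_le_sub_one_of_pos (div_pos hApos hBpos)
      have h1 : A / B - 1 = (A - B) / B := by field_simp
      have hBs : Real.exp (s/2) ≤ B := by
        rw [hB]; exact le_add_of_nonneg_left (Real.exp_pos _).le
      have hABnn : 0 ≤ A - B := by linarith
      have h2 : (A - B) / B ≤ (A - B) / Real.exp (s/2) :=
        div_le_div_of_nonneg_left hABnn (Real.exp_pos _) hBs
      have h3 : (A - B) / Real.exp (s/2) = (A - B) * Real.exp (-s/2) := by
        rw [neg_div, Real.exp_neg]
        ring
      have hAB : A - B = Real.exp (L/2) - Real.exp (-L/2) := by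
        rw [hA, hB]; ring
      have : Real.log (A / B) ≤ (Real.exp (L/2) - Real.exp (-L/2)) * Real.exp (-s/2) := by
        rw [← hAB, ← h3]
        linarith
      rw [hCdef, hsdef]
      calc 2 * Real.log (A / B)
          ≤ 2 * ((Real.exp (L/2) - Real.exp (-L/2)) * Real.exp (-s/2)) := by linarith
        _ = 2 * (Real.exp (L/2) - Real.exp (-L/2)) * Real.exp (-(ℓ₁ i + ℓ₂ i)/2) := by
            rw [hsdef]; ring
  -- the floor map
  set Nf : I → ℕ := fun i => ⌊ℓ₁ i + ℓ₂ i⌋₊ with hNf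
  have hmem : ∀ i, i ∈ {j : I | ((Nf i : ℝ)) ≤ ℓ₁ j + ℓ₂ j ∧ ℓ₁ j + ℓ₂ j < (Nf i) + 1} := by
    intro i
    have hs : 0 < ℓ₁ i + ℓ₂ i := add_pos (hpos i).1 (hpos i).2
    exact ⟨Nat.floor_le hs.le, Nat.lt_floor_add_one _⟩
  set F : I → ℝ := fun i => C * Real.exp (-(Nf i : ℝ)/2) with hF
  have hDF : ∀ i, D L (ℓ₁ i) (ℓ₂ i) ≤ F i := by
    intro i
    refine le_trans (hD i).2 ?_
    rw [hF]
    have h1 : (Nf i : ℝ) ≤ ℓ₁ i + ℓ₂ i := (hmem i).1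
    have : Real.exp (-(ℓ₁ i + ℓ₂ i)/2) ≤ Real.exp (-(Nf i : ℝ)/2) :=
      Real.exp_le_exp.mpr (by linarith)
    exact mul_le_mul_of_nonneg_left this hCpos.le
  apply summable_of_sum_le (fun i => (hD i).1) (c := C * ∑' N, g N)
  intro t
  calc ∑ i ∈ t, D L (ℓ₁ i) (ℓ₂ i)
      ≤ ∑ i ∈ t, F i := Finset.sum_le_sum (fun i _ => hDF i)
    _ = ∑ j ∈ t.image Nf, ∑ i ∈ t.filter (fun i => Nf i = j), F i :=
        (Finset.sum_fiberwise_of_maps_to (fun x hx => Finset.mem_image_of_mem Nf hx) F).symm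
    _ ≤ ∑ j ∈ t.image Nf, C * g j := by
        apply Finset.sum_le_sum
        intro j _
        have heq : ∑ i ∈ t.filter (fun i => Nf i = j), F i
            = (t.filter (fun i => Nf i = j)).card * (C * Real.exp (-(j:ℝ)/2)) := by
          rw [Finset.sum_congr rfl (fun i hi => ?_), Finset.sum_const, nsmul_eq_mul]
          have := (Finset.mem_filter.mp hi).2
          rw [hF]
          simp [this]
        rw [heq]
        have hsubset : (↑(t.filter (fun i => Nf i = j)) : Set I) ⊆
            {i : I | (j : ℝ) ≤ ℓ₁ i + ℓ₂ i ∧ ℓ₁ i + ℓ₂ i < j + 1} := by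
          intro i hi
          simp only [Finset.coe_filter, Set.mem_setOf_eq] at hi
          have := hmem i
          rw [hi.2] at this
          exact this
        have hcard' : ((t.filter (fun i => Nf i = j)).card : ℝ) ≤ m * ((j:ℝ) + 1) ^ k := by
          have h1 : (↑(t.filter (fun i => Nf i = j)) : Set I).ncard ≤
              {i : I | (j : ℝ) ≤ ℓ₁ i + ℓ₂ i ∧ ℓ₁ i + ℓ₂ i < j + 1}.ncard :=
            Set.ncard_le_ncard hsubset (hfin j)
          rw [Set.ncard_coe_finset] at h1
          calc ((t.filter (fun i => Nf i = j)).card : ℝ)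
              ≤ ({i : I | (j : ℝ) ≤ ℓ₁ i + ℓ₂ i ∧ ℓ₁ i + ℓ₂ i < j + 1}.ncard : ℝ) := by
                exact_mod_cast h1
            _ ≤ m * ((j:ℝ) + 1) ^ k := hcard j
        have hxpos : 0 ≤ C * Real.exp (-(j:ℝ)/2) := by positivity
        calc ((t.filter (fun i => Nf i = j)).card : ℝ) * (C * Real.exp (-(j:ℝ)/2))
            ≤ (m * ((j:ℝ) + 1) ^ k) * (C * Real.exp (-(j:ℝ)/2)) :=
              mul_le_mul_of_nonneg_right hcard' hxpos
          _ = C * g j := by rw [hgdef]; ring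
    _ = C * ∑ j ∈ t.image Nf, g j := by rw [Finset.mul_sum]
    _ ≤ C * ∑' N, g N := by
        apply mul_le_mul_of_nonneg_left _ hCpos.le
        exact Summable.sum_le_tsum _ (fun j _ => hgnn j) hgsum
end

section
/- Let I be a countable index set and ℓ₁, ℓ₂ : I → ℝ positive functions such that the sets {i : N ≤ ℓ₁(i)+ℓ₂(i) < N+1} are finite for all N and ∑_{i ∈ I} D(L, ℓ₁(i), ℓ₂(i)) = L for some L > 0, where D(L,x,y) := 2·log((e^{L/2} + e^{(x+y)/2})/(e^{-L/2} + e^{(x+y)/2})). Then ∑_{i ∈ I} H(ℓ₁(i)+ℓ₂(i), L) > 1, where H(u,v) := 1/(1+e^{(u+v)/2}) + 1/(1+e^{(u-v)/2}), provided the latter sum converges. -/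
lemma D_hasDerivAt (x y s : ℝ) :
    HasDerivAt (fun s => D s x y) (H (x+y) s) s := by
  set u := x + y with hu
  set T := Real.exp (u/2) with hT
  have hTpos : 0 < T := Real.exp_pos _
  have e1 : HasDerivAt (fun s : ℝ => Real.exp (s/2)) (Real.exp (s/2) * (1/2)) s := by
    simpa [Function.comp_def] using (Real.hasDerivAt_exp (s/2)).comp s ((hasDerivAt_id s).div_const 2)
  have e2 : HasDerivAt (fun s : ℝ => Real.exp (-s/2)) (Real.exp (-s/2) * (-1/2)) s := by
    have : HasDerivAt (fun s : ℝ => -s/2) (-1/2) s := by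
      simpa using ((hasDerivAt_id s).neg.div_const 2)
    simpa [Function.comp_def] using (Real.hasDerivAt_exp (-s/2)).comp s this
  have h1 : HasDerivAt (fun s : ℝ => Real.exp (s/2) + T)
      (Real.exp (s/2) * (1/2)) s := e1.add_const T
  have h2 : HasDerivAt (fun s : ℝ => Real.exp (-s/2) + T)
      (Real.exp (-s/2) * (-1/2)) s := e2.add_const T
  have hne1 : Real.exp (s/2) + T ≠ 0 := by positivity
  have hne2 : Real.exp (-s/2) + T ≠ 0 := by positivity
  have l1 := h1.log hne1
  have l2 := h2.log hne2
  have hD : (fun s => D s x y) = fun s =>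
      2 * (Real.log (Real.exp (s/2) + T) - Real.log (Real.exp (-s/2) + T)) := by
    funext s
    rw [D, Real.log_div (by positivity) (by positivity)]
  rw [hD]
  have := ((l1.sub l2).const_mul 2)
  convert this using 1
  · rfl
  · rfl
  · rfl
  have hps : (0:ℝ) < Real.exp (s/2) := Real.exp_pos _
  have hes : Real.exp ((u+s)/2) = T * Real.exp (s/2) := by
    rw [hT, ← Real.exp_add]; ring_nf
  have hes' : Real.exp ((u-s)/2) = T * Real.exp (-s/2) := by
    rw [hT, ← Real.exp_add]; ring_nf
  have hneg : Real.exp (-s/2) = (Real.exp (s/2))⁻¹ := by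
    rw [show -s/2 = -(s/2) by ring, Real.exp_neg]
  rw [H, hes, hes', hneg]
  have h1' : (0:ℝ) < 1 + T * Real.exp (s/2) := by positivity
  have h2' : (0:ℝ) < 1 + T * (Real.exp (s/2))⁻¹ := by positivity
  field_simp
  ring

lemma H_mono {u s L : ℝ} (hu : 0 < u) (hs : 0 ≤ s) (hsL : s < L) : H u s < H u L := by
  set A := Real.exp (u/2) with hA
  set p := Real.exp (s/2) with hp
  set q := Real.exp (L/2) with hq
  have hA1 : 1 < A := by rw [hA]; exact Real.one_lt_exp_iff.mpr (by linarith)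
  have hp1 : 1 ≤ p := by
    rw [hp, ← Real.exp_zero]; exact Real.exp_le_exp.mpr (by linarith)
  have hpq : p < q := by rw [hp, hq]; exact Real.exp_lt_exp.mpr (by linarith)
  have hp0 : 0 < p := by linarith
  have hq0 : 0 < q := by linarith
  have hups : Real.exp ((u+s)/2) = A * p := by rw [hA, hp, ← Real.exp_add]; ring_nf
  have hums : Real.exp ((u-s)/2) = A / p := by
    rw [hA, hp, ← Real.exp_sub]; ring_nf
  have hupL : Real.exp ((u+L)/2) = A * q := by rw [hA, hq, ← Real.exp_add]; ring_nf
  have humL : Real.exp ((u-L)/2) = A / q := by rw [hA, hq, ← Real.exp_sub]; ring_nf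
  rw [H, H, hups, hums, hupL, humL]
  rw [← sub_pos]
  have d1 : (0:ℝ) < 1 + A * p := by positivity
  have d2 : (0:ℝ) < 1 + A / p := by positivity
  have d3 : (0:ℝ) < 1 + A * q := by positivity
  have d4 : (0:ℝ) < 1 + A / q := by positivity
  have key : (1 / (1 + A * q) + 1 / (1 + A / q)) - (1 / (1 + A * p) + 1 / (1 + A / p))
      = A * (q - p) * (p * q - 1) * (A ^ 2 - 1) /
        ((1 + A * q) * (q + A) * (1 + A * p) * (p + A)) := by
    rw [div_add_div _ _ (ne_of_gt d3) (ne_of_gt d4), div_add_div _ _ (ne_of_gt d1) (ne_of_gt d2)]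
    field_simp
    ring
  rw [key]
  have hnum : 0 < A * (q - p) * (p * q - 1) * (A ^ 2 - 1) := by
    have h1 : 0 < q - p := by linarith
    have h2 : 0 < p * q - 1 := by nlinarith
    have h3 : 0 < A ^ 2 - 1 := by nlinarith
    positivity
  have hden : 0 < (1 + A * q) * (q + A) * (1 + A * p) * (p + A) := by positivity
  positivity

lemma D_lt (x y L : ℝ) (hx : 0 < x) (hy : 0 < y) (hL : 0 < L) :
    D L x y < L * H (x+y) L := by
  set u := x + y with hu
  have hu0 : 0 < u := by positivity
  set g : ℝ → ℝ := fun s => s * H u L - D s x y with hg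
  have hgderiv : ∀ s, HasDerivAt g (H u L - H u s) s := fun s => by
    simpa [hg, hu, Pi.sub_def] using ((hasDerivAt_id s).mul_const (H u L)).sub (D_hasDerivAt x y s)
  have hmono : StrictMonoOn g (Set.Icc 0 L) := by
    apply strictMonoOn_of_deriv_pos (convex_Icc 0 L)
    · exact Continuous.continuousOn (by
        have : Differentiable ℝ g := fun s => (hgderiv s).differentiableAt
        exact this.continuous)
    · intro s hsmem
      rw [interior_Icc] at hsmem
      rw [(hgderiv s).deriv]
      have := H_mono (u := u) hu0 (le_of_lt hsmem.1) hsmem.2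
      linarith
  have h0L : g 0 < g L := hmono (Set.left_mem_Icc.mpr hL.le) (Set.right_mem_Icc.mpr hL.le) hL
  have hg0 : g 0 = 0 := by
    have : D 0 x y = 0 := by
      rw [D, show (0:ℝ)/2 = 0 by norm_num, show (-0:ℝ)/2 = 0 by norm_num,
        div_self (by positivity), Real.log_one, mul_zero]
    simp [hg, this]
  rw [hg0] at h0L
  simpa [hg] using h0L

theorem stmt14 (I : Type*) [Countable I] [Nonempty I] (ℓ₁ ℓ₂ : I → ℝ)
    (hpos : ∀ i, 0 < ℓ₁ i ∧ 0 < ℓ₂ i)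
    (hfin : ∀ N : ℕ, {i : I | (N : ℝ) ≤ ℓ₁ i + ℓ₂ i ∧ ℓ₁ i + ℓ₂ i < N + 1}.Finite)
    (L : ℝ) (hL : 0 < L)
    (hid : ∑' i, D L (ℓ₁ i) (ℓ₂ i) = L)
    (hsum : Summable (fun i => H (ℓ₁ i + ℓ₂ i) L)) :
    1 < ∑' i, H (ℓ₁ i + ℓ₂ i) L := by
  have hDsum : Summable (fun i => D L (ℓ₁ i) (ℓ₂ i)) := by
    by_contra h
    rw [tsum_eq_zero_of_not_summable h] at hid
    linarith
  have key : ∀ i, D L (ℓ₁ i) (ℓ₂ i) < L * H (ℓ₁ i + ℓ₂ i) L := fun i =>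
    D_lt _ _ _ (hpos i).1 (hpos i).2 hL
  have hHsum' : Summable (fun i => L * H (ℓ₁ i + ℓ₂ i) L) := hsum.mul_left L
  have hlt : ∑' i, D L (ℓ₁ i) (ℓ₂ i) < ∑' i, L * H (ℓ₁ i + ℓ₂ i) L :=
    Summable.tsum_lt_tsum (fun i => (key i).le) (key (Classical.arbitrary I)) hDsum hHsum'
  rw [hid, tsum_mul_left] at hlt
  have := (mul_lt_mul_iff_right₀ hL).mp (by linarith : L * 1 < L * ∑' i, H (ℓ₁ i + ℓ₂ i) L)
  exact this
end

section
/- For all x, y, L > 0, define f(L) := L·H(x+y, L) − D(L, x, y) with H(u,v) := 1/(1+e^{(u+v)/2}) + 1/(1+e^{(u-v)/2}) and D(L,x,y) := 2·log((e^{L/2} + e^{(x+y)/2})/(e^{-L/2} + e^{(x+y)/2})). Then f(0) = 0 and, for every u > 0, f'(u) = u·(∂H/∂v)(x+y, u) > 0. -/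
open Real

lemma hasDerivAt_H (s u : ℝ) :
    HasDerivAt (fun v : ℝ => H s v)
      (-(1/2) * exp ((s+u)/2) / (1 + exp ((s+u)/2))^2
        + (1/2) * exp ((s-u)/2) / (1 + exp ((s-u)/2))^2) u := by
  have h1 : HasDerivAt (fun v : ℝ => (s+v)/2) (1/2) u := by
    simpa using ((hasDerivAt_id u).const_add s).div_const 2
  have h2 : HasDerivAt (fun v : ℝ => (s-v)/2) (-(1/2)) u := by
    have := ((hasDerivAt_id u).const_sub s).div_const 2
    simpa [neg_div] using this
  have e1 := h1.exp
  have e2 := h2.exp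
  have ne1 : (1 : ℝ) + exp ((s+u)/2) ≠ 0 := by positivity
  have ne2 : (1 : ℝ) + exp ((s-u)/2) ≠ 0 := by positivity
  have i1 := ((e1.const_add 1).inv ne1)
  have i2 := ((e2.const_add 1).inv ne2)
  have := i1.add i2
  unfold H
  simp only [one_div]
  refine this.congr_deriv ?_
  ring

lemma hasDerivAt_D (x y u : ℝ) :
    HasDerivAt (fun L : ℝ => D L x y) (H (x + y) u) u := by
  have E := exp ((x+y)/2)
  have hEpos : 0 < exp ((x+y)/2) := exp_pos _
  have h1 : HasDerivAt (fun L : ℝ => L/2) (1/2) u := by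
    simpa using (hasDerivAt_id u).div_const 2
  have h2 : HasDerivAt (fun L : ℝ => -L/2) (-(1/2)) u := by
    have := ((hasDerivAt_id u).neg).div_const 2
    simpa [neg_div] using this
  have p1 : (0:ℝ) < exp (u/2) + exp ((x+y)/2) := by positivity
  have p2 : (0:ℝ) < exp (-u/2) + exp ((x+y)/2) := by positivity
  have d1 : HasDerivAt (fun L : ℝ => Real.log (exp (L/2) + exp ((x+y)/2)))
      ((exp (u/2) * (1/2)) / (exp (u/2) + exp ((x+y)/2))) u :=
    (h1.exp.add_const _).log (ne_of_gt p1)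
  have d2 : HasDerivAt (fun L : ℝ => Real.log (exp (-L/2) + exp ((x+y)/2)))
      ((exp (-u/2) * (-(1/2))) / (exp (-u/2) + exp ((x+y)/2))) u :=
    (h2.exp.add_const _).log (ne_of_gt p2)
  have hD : ∀ L : ℝ, D L x y =
      2 * (Real.log (exp (L/2) + exp ((x+y)/2)) - Real.log (exp (-L/2) + exp ((x+y)/2))) := by
    intro L
    have pa : (0:ℝ) < exp (L/2) + exp ((x+y)/2) := by positivity
    have pb : (0:ℝ) < exp (-L/2) + exp ((x+y)/2) := by positivity
    rw [D, Real.log_div (ne_of_gt pa) (ne_of_gt pb)]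
  have main := ((d1.sub d2).const_mul 2)
  have : HasDerivAt (fun L : ℝ => D L x y)
      (2 * ((exp (u/2) * (1/2)) / (exp (u/2) + exp ((x+y)/2))
        - (exp (-u/2) * (-(1/2))) / (exp (-u/2) + exp ((x+y)/2)))) u := by
    refine main.congr_of_eventuallyEq ?_
    filter_upwards with L using (hD L)
  convert this using 1
  have hsplit1 : exp ((x+y+u)/2) = exp ((x+y)/2) * exp (u/2) := by
    rw [← Real.exp_add]; ring_nf
  have hsplit2 : exp ((x+y-u)/2) = exp ((x+y)/2) * exp (-u/2) := by
    rw [← Real.exp_add]; ring_nf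
  have hu : exp (u/2) * exp (-u/2) = 1 := by
    rw [← Real.exp_add, show u/2 + -u/2 = (0:ℝ) by ring, Real.exp_zero]
  have hupos := exp_pos (u/2)
  have hunpos := exp_pos (-u/2)
  rw [H, hsplit1, hsplit2]
  have t1 : 1 / (1 + exp ((x+y)/2) * exp (u/2)) = exp (-u/2) / (exp (-u/2) + exp ((x+y)/2)) := by
    rw [div_eq_div_iff (by positivity) (by exact ne_of_gt p2)]
    linear_combination (-(exp ((x+y)/2))) * hu
  have t2 : 1 / (1 + exp ((x+y)/2) * exp (-u/2)) = exp (u/2) / (exp (u/2) + exp ((x+y)/2)) := by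
    rw [div_eq_div_iff (by positivity) (by exact ne_of_gt p1)]
    linear_combination (-(exp ((x+y)/2))) * hu
  rw [t1, t2]
  ring

theorem stmt18 (x y : ℝ) (hx : 0 < x) (hy : 0 < y) :
    (fun L : ℝ => L * H (x+y) L - D L x y) 0 = 0 ∧
    ∀ u : ℝ, 0 < u →
      HasDerivAt (fun L : ℝ => L * H (x+y) L - D L x y)
        (u * deriv (fun v : ℝ => H (x+y) v) u) u ∧
      0 < u * deriv (fun v : ℝ => H (x+y) v) u := by
  constructor
  · have h0 : D 0 x y = 0 := by
      rw [D, show (-0:ℝ)/2 = 0/2 by norm_num, div_self (by positivity)]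
      simp
    simp [h0]
  · intro u hu
    have hH := hasDerivAt_H (x+y) u
    have hderiv : deriv (fun v : ℝ => H (x+y) v) u
        = -(1/2) * exp ((x+y+u)/2) / (1 + exp ((x+y+u)/2))^2
          + (1/2) * exp ((x+y-u)/2) / (1 + exp ((x+y-u)/2))^2 := hH.deriv
    have hDd := hasDerivAt_D x y u
    have prod := (hasDerivAt_id u).mul hH
    have total := prod.sub hDd
    have hd : HasDerivAt (fun L : ℝ => L * H (x+y) L - D L x y)
        (u * deriv (fun v : ℝ => H (x+y) v) u) u := by
      refine total.congr_deriv ?_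
      rw [hderiv]
      simp only [id_eq]
      ring
    refine ⟨hd, ?_⟩
    rw [hderiv]
    set a := (x+y-u)/2 with ha
    set b := (x+y+u)/2 with hb
    have hab : exp a < exp b := by
      apply Real.exp_lt_exp.mpr
      rw [ha, hb]
      linarith
    have hprod : 1 < exp a * exp b := by
      rw [← Real.exp_add]
      have := Real.exp_lt_exp.mpr (show (0:ℝ) < a + b by rw [ha, hb]; linarith)
      simpa using this
    have pa := exp_pos a
    have pb := exp_pos b
    have qa : (0:ℝ) < (1 + exp a)^2 := by positivity
    have qb : (0:ℝ) < (1 + exp b)^2 := by positivity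
    have key : exp b * (1 + exp a)^2 < exp a * (1 + exp b)^2 := by
      nlinarith [mul_pos (sub_pos.mpr hab) (sub_pos.mpr hprod)]
    have hlt : exp b / (1 + exp b)^2 < exp a / (1 + exp a)^2 :=
      (div_lt_div_iff₀ qb qa).mpr key
    have hdpos : 0 < -(1/2) * exp b / (1 + exp b)^2 + (1/2) * exp a / (1 + exp a)^2 := by
      have := sub_pos.mpr hlt
      field_simp at this ⊢
      linarith [this]
    exact mul_pos hu hdpos
end
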